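/- For every h ≥ 0, every real constant C > 0, every prime p, and every S ⊆ ℤ_p with |S| ≥ 2: the sum over all integer tuples 1 ≤ m_1 < ... < m_h < |S| of Π_{i=0}^{h-1} (1/p + C·√(log|S|)/(|S|·√(m_{i+1} - m_i))) is at most (|S|/p + 2C·√(log|S|)/√|S|)^h, where m_0 = 0. -/

import Mathlib

open scoped Classical

/-- Extend a tuple `m : Fin h → ℕ` to indices `0, …, h` by `m_0 = 0`. -/
def extM0 (h : ℕ) (m : Fin h → ℕ) : ℕ → ℕ := fun i =>
  if hi : 0 < i ∧ i ≤ h then m ⟨i - 1, by omega⟩ else 0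

lemma extM0_zero (h : ℕ) (m : Fin h → ℕ) : extM0 h m 0 = 0 := by simp [extM0]

lemma extM0_succ (h : ℕ) (m : Fin h → ℕ) (i : ℕ) (hi : i < h) :
    extM0 h m (i + 1) = m ⟨i, hi⟩ := by
  have : 0 < i + 1 ∧ i + 1 ≤ h := ⟨Nat.succ_pos _, hi⟩
  simp [extM0, this]

lemma sqrt_sum_le (n : ℕ) :
    ∑ t ∈ Finset.Ico 1 (n + 1), (1 / Real.sqrt t) ≤ 2 * Real.sqrt n := by
  induction n with
  | zero => simp
  | succ n ih =>
    rw [Finset.sum_Ico_succ_top (by omega)]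
    have ha : Real.sqrt n ^ 2 = n := Real.sq_sqrt (by positivity)
    have hb : Real.sqrt (n + 1) ^ 2 = (n : ℝ) + 1 := by
      rw [Real.sq_sqrt (by positivity)]
    have hbpos : 0 < Real.sqrt ((n : ℕ) + 1 : ℕ) := by
      apply Real.sqrt_pos.2; positivity
    have hann : (0:ℝ) ≤ Real.sqrt n := Real.sqrt_nonneg _
    have key : 1 / Real.sqrt (((n : ℕ) + 1 : ℕ)) ≤
        2 * Real.sqrt (n + 1) - 2 * Real.sqrt n := by
      rw [div_le_iff₀ hbpos]
      push_cast
      nlinarith [hbpos, hann, ha, hb]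
    push_cast at key ⊢
    linarith [ih, key]

lemma aux3 (c nn x : ℝ) (hx : 0 < x) (hxx : x * x = nn) :
    c / nn * (2 * x) = 2 * c / x := by
  subst hxx
  field_simp

theorem stmt14 (h : ℕ) (C : ℝ) (hC : 0 < C) (p : ℕ) [Fact p.Prime]
    (S : Finset (ZMod p)) (hS : 2 ≤ S.card) :
    ∑ m ∈ (Fintype.piFinset fun _ : Fin h => Finset.Ico 1 S.card).filter
        (fun m => StrictMono m),
      ∏ i ∈ Finset.range h,
        (1 / (p : ℝ) + C * Real.sqrt (Real.log S.card) /
          (S.card * Real.sqrt ((extM0 h m (i + 1) : ℝ) - extM0 h m i))) ≤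
      ((S.card : ℝ) / p + 2 * C * Real.sqrt (Real.log S.card) / Real.sqrt S.card) ^ h := by
  classical
  set n := S.card with hn
  have hn2 : 2 ≤ n := hS
  have hp : 0 < p := (Fact.out : p.Prime).pos
  set c : ℝ := C * Real.sqrt (Real.log n) with hc
  have hc0 : 0 ≤ c := by positivity
  set f : ℕ → ℝ := fun d => 1 / (p : ℝ) + c / (n * Real.sqrt d) with hf
  have hf0 : ∀ d, 0 ≤ f d := by
    intro d
    have : (0:ℝ) ≤ n * Real.sqrt d := by positivity
    have h1 : (0:ℝ) ≤ 1 / (p:ℝ) := by positivity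
    have h2 : (0:ℝ) ≤ c / (n * Real.sqrt d) := div_nonneg hc0 this
    simpa [hf] using add_nonneg h1 h2
  set T := (Fintype.piFinset fun _ : Fin h => Finset.Ico 1 n).filter
      (fun m => StrictMono m) with hT
  set g : (Fin h → ℕ) → Fin h → ℕ :=
    fun m i => extM0 h m ((i : ℕ) + 1) - extM0 h m (i : ℕ) with hg
  -- basic facts about members of T
  have hTmem : ∀ m ∈ T, (∀ i : Fin h, m i ∈ Finset.Ico 1 n) ∧ StrictMono m := by
    intro m hm
    rw [hT, Finset.mem_filter] at hm
    exact ⟨fun i => (Fintype.mem_piFinset.1 hm.1) i, hm.2⟩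
  have hle : ∀ m ∈ T, ∀ i : ℕ, i < h → extM0 h m i ≤ extM0 h m (i + 1) := by
    intro m hm i hi
    obtain ⟨hmem, hmono⟩ := hTmem m hm
    cases i with
    | zero => simp [extM0_zero]
    | succ j =>
      rw [extM0_succ h m j (by omega), extM0_succ h m (j+1) hi]
      exact le_of_lt (hmono (by simp [Fin.lt_def]))
  -- Step 1: rewrite the summand
  have step1 : ∀ m ∈ T,
      ∏ i ∈ Finset.range h,
        (1 / (p : ℝ) + C * Real.sqrt (Real.log n) /
          (n * Real.sqrt ((extM0 h m (i + 1) : ℝ) - extM0 h m i))) =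
      ∏ i : Fin h, f (g m i) := by
    intro m hm
    rw [show (∏ i : Fin h, f (g m i)) =
        ∏ i ∈ Finset.range h, f (extM0 h m (i + 1) - extM0 h m i) from
      Fin.prod_univ_eq_prod_range (fun j => f (extM0 h m (j + 1) - extM0 h m j)) h]
    refine Finset.prod_congr rfl fun i hi => ?_
    have hi' : i < h := Finset.mem_range.1 hi
    have hsub := hle m hm i hi'
    rw [hf]
    push_cast [Nat.cast_sub hsub]
    rw [hc]
  -- injectivity of the gap map on T
  have hinj : Set.InjOn g T := by
    intro m hm m' hm' hgg
    obtain ⟨hmem, hmono⟩ := hTmem m hm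
    obtain ⟨hmem', hmono'⟩ := hTmem m' hm'
    have claim : ∀ j : ℕ, ∀ hj : j < h, m ⟨j, hj⟩ = m' ⟨j, hj⟩ := by
      intro j
      induction j with
      | zero =>
        intro hj
        have := congrFun hgg ⟨0, hj⟩
        simp only [hg] at this
        rwa [extM0_succ h m 0 hj, extM0_succ h m' 0 hj, extM0_zero, extM0_zero,
          Nat.sub_zero, Nat.sub_zero] at this
      | succ j ih =>
        intro hj
        have hj' : j < h := by omega
        have heq := congrFun hgg ⟨j + 1, hj⟩
        simp only [hg] at heq
        rw [extM0_succ h m (j+1) hj, extM0_succ h m' (j+1) hj,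
          extM0_succ h m j hj', extM0_succ h m' j hj'] at heq
        have h1 : m ⟨j, hj'⟩ < m ⟨j+1, hj⟩ := hmono (by simp [Fin.lt_def])
        have h2 : m' ⟨j, hj'⟩ < m' ⟨j+1, hj⟩ := hmono' (by simp [Fin.lt_def])
        have := ih hj'
        omega
    funext i
    have := claim i.1 i.2
    simpa using this
  have step2 : ∑ m ∈ T, ∏ i : Fin h, f (g m i) =
      ∑ d ∈ T.image g, ∏ i : Fin h, f (d i) := by
    rw [Finset.sum_image (fun m hm m' hm' hh => hinj hm hm' hh)]
  have himg : T.image g ⊆ Fintype.piFinset fun _ : Fin h => Finset.Ico 1 n := by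
    intro d hd
    obtain ⟨m, hm, rfl⟩ := Finset.mem_image.1 hd
    obtain ⟨hmem, hmono⟩ := hTmem m hm
    rw [Fintype.mem_piFinset]
    intro i
    rw [Finset.mem_Ico]
    obtain ⟨iv, hiv⟩ := i
    cases iv with
    | zero =>
      have := Finset.mem_Ico.1 (hmem ⟨0, hiv⟩)
      simp only [hg]
      rw [extM0_succ h m 0 hiv, extM0_zero]
      omega
    | succ j =>
      have hj' : j < h := by omega
      have hmem1 := Finset.mem_Ico.1 (hmem ⟨j + 1, hiv⟩)
      have hlt : m ⟨j, hj'⟩ < m ⟨j+1, hiv⟩ := hmono (by simp [Fin.lt_def])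
      simp only [hg]
      rw [extM0_succ h m (j+1) hiv, extM0_succ h m j hj']
      omega
  have step3 : ∑ d ∈ T.image g, ∏ i : Fin h, f (d i) ≤
      ∑ d ∈ (Fintype.piFinset fun _ : Fin h => Finset.Ico 1 n), ∏ i : Fin h, f (d i) :=
    Finset.sum_le_sum_of_subset_of_nonneg himg
      (fun d _ _ => Finset.prod_nonneg fun i _ => hf0 _)
  have step4 : ∑ d ∈ (Fintype.piFinset fun _ : Fin h => Finset.Ico 1 n),
      ∏ i : Fin h, f (d i) = (∑ d ∈ Finset.Ico 1 n, f d) ^ h := by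
    rw [← Finset.prod_univ_sum]
    simp [Finset.prod_const]
  -- the key single-factor estimate
  have hsqrtn : (0:ℝ) < Real.sqrt n := Real.sqrt_pos.2 (by positivity)
  have hnn : Real.sqrt n * Real.sqrt n = (n:ℝ) :=
    Real.mul_self_sqrt (by positivity)
  have key : ∑ d ∈ Finset.Ico 1 n, f d ≤
      (n : ℝ) / p + 2 * C * Real.sqrt (Real.log n) / Real.sqrt n := by
    have hsplit : ∑ d ∈ Finset.Ico 1 n, f d =
        (n - 1 : ℝ) / p + (c / n) * ∑ d ∈ Finset.Ico 1 n, (1 / Real.sqrt d) := by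
      rw [hf, Finset.sum_add_distrib, Finset.sum_const, Finset.mul_sum]
      congr 1
      · rw [Nat.card_Ico, nsmul_eq_mul, Nat.cast_sub (by omega : 1 ≤ n)]
        push_cast
        ring
      · refine Finset.sum_congr rfl fun d _ => ?_
        rw [div_mul_eq_div_div, mul_one_div]
    have hsum : ∑ d ∈ Finset.Ico 1 n, (1 / Real.sqrt d) ≤ 2 * Real.sqrt n := by
      have : n = (n - 1) + 1 := by omega
      calc ∑ d ∈ Finset.Ico 1 n, (1 / Real.sqrt d)
          = ∑ d ∈ Finset.Ico 1 ((n-1) + 1), (1 / Real.sqrt d) := by rw [← this]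
        _ ≤ 2 * Real.sqrt (n - 1 : ℕ) := sqrt_sum_le (n - 1)
        _ ≤ 2 * Real.sqrt n := by
            have : ((n - 1 : ℕ) : ℝ) ≤ (n : ℝ) := by
              push_cast [Nat.cast_sub (by omega : 1 ≤ n)]; linarith
            have := Real.sqrt_le_sqrt this
            linarith
    have hcn : (0:ℝ) ≤ c / n := by positivity
    have hppos : (0:ℝ) < p := by exact_mod_cast hp
    have h1 : (n - 1 : ℝ) / p ≤ (n : ℝ) / p := by
      gcongr
      linarith
    have h2 : (c / n) * ∑ d ∈ Finset.Ico 1 n, (1 / Real.sqrt d) ≤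
        (c / n) * (2 * Real.sqrt n) := by
      apply mul_le_mul_of_nonneg_left hsum hcn
    have h3 : (c / n) * (2 * Real.sqrt n) =
        2 * C * Real.sqrt (Real.log n) / Real.sqrt n := by
      have h3a : (c / n) * (2 * Real.sqrt n) = 2 * c / Real.sqrt n :=
        aux3 c n (Real.sqrt n) hsqrtn hnn
      rw [h3a, hc]
      ring
    rw [hsplit]
    calc (n - 1 : ℝ) / p + (c / n) * ∑ d ∈ Finset.Ico 1 n, (1 / Real.sqrt d)
        ≤ (n : ℝ) / p + (c / n) * (2 * Real.sqrt n) := by linarith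
      _ = (n : ℝ) / p + 2 * C * Real.sqrt (Real.log n) / Real.sqrt n := by rw [h3]
  -- put everything together
  have hbase : (0:ℝ) ≤ ∑ d ∈ Finset.Ico 1 n, f d :=
    Finset.sum_nonneg fun d _ => hf0 d
  calc ∑ m ∈ T, ∏ i ∈ Finset.range h,
        (1 / (p : ℝ) + C * Real.sqrt (Real.log n) /
          (n * Real.sqrt ((extM0 h m (i + 1) : ℝ) - extM0 h m i)))
      = ∑ m ∈ T, ∏ i : Fin h, f (g m i) := Finset.sum_congr rfl step1
    _ = ∑ d ∈ T.image g, ∏ i : Fin h, f (d i) := step2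
    _ ≤ ∑ d ∈ (Fintype.piFinset fun _ : Fin h => Finset.Ico 1 n),
          ∏ i : Fin h, f (d i) := step3
    _ = (∑ d ∈ Finset.Ico 1 n, f d) ^ h := step4
    _ ≤ ((n : ℝ) / p + 2 * C * Real.sqrt (Real.log n) / Real.sqrt n) ^ h :=
        pow_le_pow_left₀ hbase key h
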